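/- Let A : U → U' be a linear operator, b ∈ U', u the solution of A u = b, and u_r ∈ U_r the Galerkin projection onto a subspace U_r (i.e., ⟨b - A u_r, w⟩ = 0 for all w ∈ U_r). Define α_r = min over nonzero x ∈ U_r of ‖A x‖_{U_r'}/‖x‖_U and β_r = max over nonzero x ∈ span{u} + U_r of ‖A x‖_{U_r'}/‖x‖_U, where ‖y‖_{U_r'} = max over nonzero w ∈ U_r of |⟨y,w⟩|/‖w‖_U. If α_r > 0, then ‖u − u_r‖_U ≤ (1 + β_r/α_r) ‖u − P_{U_r} u‖_U, where P_{U_r} is the orthogonal projection onto U_r. -/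

import Mathlib

open Matrix BigOperators

noncomputable section

/-- Inner product induced by `R`: `⟨x,y⟩_U = ⟨R x, y⟩`. -/
def ipR {n : ℕ} (R : Matrix (Fin n) (Fin n) ℝ) (x y : Fin n → ℝ) : ℝ :=
  R.mulVec x ⬝ᵥ y

/-- Norm induced by `R`. -/
def normR {n : ℕ} (R : Matrix (Fin n) (Fin n) ℝ) (x : Fin n → ℝ) : ℝ :=
  Real.sqrt (ipR R x x)

/-- Euclidean norm. -/
def norm2 {m : ℕ} (v : Fin m → ℝ) : ℝ :=
  Real.sqrt (v ⬝ᵥ v)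

/-- Dual norm `‖y‖_{U'}` induced by `⟨·, R⁻¹ ·⟩`. -/
def normDual {n : ℕ} (R : Matrix (Fin n) (Fin n) ℝ) (y : Fin n → ℝ) : ℝ :=
  Real.sqrt (y ⬝ᵥ R⁻¹.mulVec y)

/-- Dual seminorm `‖y‖_{Z'} = sup_{w ∈ Z, w ≠ 0} |⟨y,w⟩|/‖w‖_U`. -/
def dualSemi {n : ℕ} (R : Matrix (Fin n) (Fin n) ℝ) (Z : Submodule ℝ (Fin n → ℝ))
    (y : Fin n → ℝ) : ℝ :=
  ⨆ w : Z, |y ⬝ᵥ (w : Fin n → ℝ)| / normR R (w : Fin n → ℝ)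

/-- Sketched dual seminorm `‖y‖_{Z'}^Θ = sup_{w ∈ Z, w ≠ 0} |⟨Θ R⁻¹ y, Θ w⟩|/‖Θ w‖`. -/
def skDualSemi {n k : ℕ} (R : Matrix (Fin n) (Fin n) ℝ) (Θ : Matrix (Fin k) (Fin n) ℝ)
    (Z : Submodule ℝ (Fin n → ℝ)) (y : Fin n → ℝ) : ℝ :=
  ⨆ w : Z, |(Θ.mulVec (R⁻¹.mulVec y)) ⬝ᵥ (Θ.mulVec (w : Fin n → ℝ))| /
      norm2 (Θ.mulVec (w : Fin n → ℝ))

/-- `i`-th column of a matrix as a vector. -/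
def colV {n m : ℕ} (M : Matrix (Fin n) (Fin m) ℝ) (i : Fin m) : Fin n → ℝ :=
  fun j => M j i

/-- Squared Frobenius norm. -/
def frob2 {a b : ℕ} (M : Matrix (Fin a) (Fin b) ℝ) : ℝ :=
  ∑ i, ∑ j, (M i j) ^ 2

lemma ipR_comm' {n : ℕ} {R : Matrix (Fin n) (Fin n) ℝ} (hR : R.PosDef)
    (x y : Fin n → ℝ) : ipR R x y = ipR R y x := by
  have hsym : Rᵀ = R := by
    have h := hR.isHermitian
    simpa [Matrix.IsHermitian, Matrix.conjTranspose_eq_transpose_of_trivial] using h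
  unfold ipR
  rw [dotProduct_comm, Matrix.dotProduct_mulVec, ← Matrix.mulVec_transpose, hsym]

lemma ipR_nonneg' {n : ℕ} {R : Matrix (Fin n) (Fin n) ℝ} (hR : R.PosDef)
    (x : Fin n → ℝ) : 0 ≤ ipR R x x := by
  have h := hR.posSemidef.dotProduct_mulVec_nonneg x
  unfold ipR
  rw [dotProduct_comm]
  simpa using h

lemma normR_sq {n : ℕ} {R : Matrix (Fin n) (Fin n) ℝ} (hR : R.PosDef)
    (x : Fin n → ℝ) : normR R x ^ 2 = ipR R x x := by
  unfold normR
  exact Real.sq_sqrt (ipR_nonneg' hR x)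

/-- Modified Cea's lemma for the Galerkin projection. -/
theorem cea_lemma {n : ℕ} (R A : Matrix (Fin n) (Fin n) ℝ) (hR : R.PosDef)
    (b u ur p : Fin n → ℝ) (Ur : Submodule ℝ (Fin n → ℝ)) (α β : ℝ)
    (hu : A.mulVec u = b) (hur : ur ∈ Ur)
    (hGal : ∀ w ∈ Ur, (b - A.mulVec ur) ⬝ᵥ w = 0)
    (hα : 0 < α)
    (hαb : ∀ x ∈ Ur, α * normR R x ≤ dualSemi R Ur (A.mulVec x))
    (hβ : ∀ x ∈ Submodule.span ℝ {u} ⊔ Ur, dualSemi R Ur (A.mulVec x) ≤ β * normR R x)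
    (hp : p ∈ Ur) (hporth : ∀ w ∈ Ur, ipR R (u - p) w = 0) :
    normR R (u - ur) ≤ (1 + β / α) * normR R (u - p) := by
  set d : Fin n → ℝ := p - ur with hd_def
  have hd : d ∈ Ur := Ur.sub_mem hp hur
  -- key algebraic identity
  have key : A.mulVec d = A.mulVec (p - u) + (b - A.mulVec ur) := by
    rw [← hu, hd_def, Matrix.mulVec_sub, Matrix.mulVec_sub]
    abel
  have hsemi : dualSemi R Ur (A.mulVec d) = dualSemi R Ur (A.mulVec (p - u)) := by
    unfold dualSemi
    refine iSup_congr fun w => ?_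
    congr 1
    rw [key, add_dotProduct, hGal w w.2, add_zero]
  have hpu : p - u ∈ Submodule.span ℝ {u} ⊔ Ur := by
    have h1 : (-u : Fin n → ℝ) ∈ Submodule.span ℝ {u} ⊔ Ur :=
      Submodule.mem_sup_left (Submodule.neg_mem _ (Submodule.mem_span_singleton_self u))
    have h2 : p ∈ Submodule.span ℝ {u} ⊔ Ur := Submodule.mem_sup_right hp
    simpa [sub_eq_add_neg] using Submodule.add_mem _ h2 h1
  have hneg : normR R (p - u) = normR R (u - p) := by
    have h : ipR R (p - u) (p - u) = ipR R (u - p) (u - p) := by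
      unfold ipR
      rw [show p - u = -(u - p) by abel, Matrix.mulVec_neg, neg_dotProduct,
        dotProduct_neg, neg_neg]
    unfold normR; rw [h]
  have hdb : α * normR R d ≤ β * normR R (u - p) := by
    calc α * normR R d ≤ dualSemi R Ur (A.mulVec d) := hαb d hd
      _ = dualSemi R Ur (A.mulVec (p - u)) := hsemi
      _ ≤ β * normR R (p - u) := hβ _ hpu
      _ = β * normR R (u - p) := by rw [hneg]
  set a := normR R (u - p) with ha_def
  set c := normR R d with hc_def
  have ha0 : 0 ≤ a := Real.sqrt_nonneg _
  have hc0 : 0 ≤ c := Real.sqrt_nonneg _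
  have hcle : c ≤ (β / α) * a := by
    rw [div_mul_eq_mul_div, le_div_iff₀ hα, mul_comm]
    exact hdb
  -- Pythagoras
  have hsplit : u - ur = (u - p) + d := by rw [hd_def]; abel
  have horth1 : ipR R (u - p) d = 0 := hporth d hd
  have horth2 : ipR R d (u - p) = 0 := (ipR_comm' hR _ _).trans horth1
  have hbil : ipR R (u - ur) (u - ur) = ipR R (u - p) (u - p) + ipR R d d := by
    rw [hsplit]
    unfold ipR at horth1 horth2 ⊢
    simp only [Matrix.mulVec_add, add_dotProduct, dotProduct_add]
    rw [horth1, horth2]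
    ring
  have hfin : normR R (u - ur) ≤ a + c := by
    unfold normR
    rw [hbil, ← normR_sq hR, ← normR_sq hR, ← ha_def, ← hc_def]
    have h1 : a ^ 2 + c ^ 2 ≤ (a + c) ^ 2 := by nlinarith
    calc Real.sqrt (a ^ 2 + c ^ 2) ≤ Real.sqrt ((a + c) ^ 2) := Real.sqrt_le_sqrt h1
      _ = a + c := by rw [Real.sqrt_sq (by linarith)]
  calc normR R (u - ur) ≤ a + c := hfin
    _ ≤ a + (β / α) * a := by linarith
    _ = (1 + β / α) * a := by ring
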